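/- arXiv:1701.06370 — 3 statements merged into one kernel-verified Lean document; each statement's English description precedes it below -/
import Mathlib

section
/- For a spherically symmetric hydrostatic equilibrium with polytropic equation of state P = Aρ^γ (A > 0, γ > 1), the total energy E = ∫₀^R (P/(γ−1)) 4πr² dr + ½ ∫₀^R ρ Φ 4πr² dr equals ((4−3γ)/(γ−1)) ∫₀^R P 4πr² dr; in particular E = 0 when γ = 4/3. -/
open MeasureTheory Real

/-- **Total energy of a polytropic spherically symmetric equilibrium.**
For a hydrostatic equilibrium with polytropic equation of state `P = Aρ^γ`
(`A > 0`, `γ > 1`), the total energy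
`E = ∫₀^R (P/(γ−1)) 4πr² dr + ½ ∫₀^R ρ Φ 4πr² dr`
equals `((4−3γ)/(γ−1)) ∫₀^R P 4πr² dr`; in particular `E = 0` when `γ = 4/3`. -/
theorem polytrope_energy_identity
    (G R A γ : ℝ) (hG : 0 < G) (hR : 0 < R) (hA : 0 < A) (hγ : 1 < γ)
    (ρ : ℝ → ℝ)
    (hρC1 : ContDiff ℝ 1 ρ) (hρnonneg : ∀ r, 0 ≤ ρ r)
    (hρsupp : ∀ r, R ≤ r → ρ r = 0)
    (m : ℝ → ℝ) (hm : ∀ r, m r = 4 * π * ∫ s in (0:ℝ)..r, ρ s * s ^ 2)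
    -- hydrostatic equation d(Aρ^γ)/dr = −G ρ m / r²
    (hhydro : ∀ r, 0 < r → deriv (fun s => A * ρ s ^ γ) r = -G * ρ r * m r / r ^ 2)
    -- Newton potential of the spherically symmetric density
    (Φ : ℝ → ℝ)
    (hΦ : ∀ r, Φ r = -(4 * π * G) * ∫ r' in Set.Ioi (0:ℝ), min r⁻¹ r'⁻¹ * ρ r' * r' ^ 2)
    (E : ℝ)
    (hE : E = (∫ r in (0:ℝ)..R, (A * ρ r ^ γ / (γ - 1)) * (4 * π * r ^ 2))
        + (1/2) * ∫ r in (0:ℝ)..R, ρ r * Φ r * (4 * π * r ^ 2)) :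
    E = ((4 - 3 * γ) / (γ - 1)) * ∫ r in (0:ℝ)..R, (A * ρ r ^ γ) * (4 * π * r ^ 2)
      ∧ (γ = 4/3 → E = 0) := by
  have hρc : Continuous ρ := hρC1.continuous
  have hρ'c : Continuous (deriv ρ) := hρC1.continuous_deriv le_rfl
  set P : ℝ → ℝ := fun r => A * ρ r ^ γ with hPdef
  set P' : ℝ → ℝ := fun r => A * ((γ * ρ r ^ (γ - 1)) * deriv ρ r) with hP'def
  -- differentiability of P
  have hPd : ∀ r, HasDerivAt P (P' r) r := by
    intro r
    have h1 : HasDerivAt (fun x : ℝ => x ^ γ) (γ * ρ r ^ (γ - 1)) (ρ r) :=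
      Real.hasDerivAt_rpow_const (Or.inr hγ.le)
    have h2 : HasDerivAt ρ (deriv ρ r) r :=
      ((hρC1.differentiable one_ne_zero) r).hasDerivAt
    exact (h1.comp r h2).const_mul A
  have hP'c : Continuous P' := by
    have h : Continuous fun r => ρ r ^ (γ - 1) :=
      hρc.rpow_const (fun x => Or.inr (by linarith))
    fun_prop
  have hPc : Continuous P := by
    have h : Continuous fun r => ρ r ^ γ :=
      hρc.rpow_const (fun x => Or.inr (by linarith))
    fun_prop
  have hγ0 : γ ≠ 0 := by positivity
  have hγ1 : γ - 1 ≠ 0 := by intro h; apply hγ.ne'; linarith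
  have hPR : P R = 0 := by
    simp [hPdef, hρsupp R le_rfl, Real.zero_rpow hγ0]
  -- primitives M and N
  set M : ℝ → ℝ := fun r => ∫ s in (0:ℝ)..r, ρ s * s ^ 2 with hMdef
  set N : ℝ → ℝ := fun r => ∫ s in (0:ℝ)..r, ρ s * s with hNdef
  have hMc : Continuous fun s : ℝ => ρ s * s ^ 2 := by fun_prop
  have hNc : Continuous fun s : ℝ => ρ s * s := by fun_prop
  have hMd : ∀ r, HasDerivAt M (ρ r * r ^ 2) r := fun r =>
    intervalIntegral.integral_hasDerivAt_right (hMc.intervalIntegrable _ _)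
      (hMc.stronglyMeasurableAtFilter _ _) hMc.continuousAt
  have hNd : ∀ r, HasDerivAt N (ρ r * r) r := fun r =>
    intervalIntegral.integral_hasDerivAt_right (hNc.intervalIntegrable _ _)
      (hNc.stronglyMeasurableAtFilter _ _) hNc.continuousAt
  set n : ℝ → ℝ := fun r => N R - N r with hndef
  have hnd : ∀ r, HasDerivAt n (-(ρ r * r)) r := fun r => by
    have h := (hasDerivAt_const r (N R)).sub (hNd r)
    rw [zero_sub] at h
    exact h
  have hnR : n R = 0 := by simp [hndef]
  have hmfun : m = fun r => 4 * π * M r := funext hm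
  have hmd : ∀ r, HasDerivAt m (4 * π * (ρ r * r ^ 2)) r := by
    intro r; rw [hmfun]; exact (hMd r).const_mul _
  have hm0 : m 0 = 0 := by rw [hm 0, intervalIntegral.integral_same]; ring
  have hmc : Continuous m := by
    rw [continuous_iff_continuousAt]; exact fun r => (hmd r).continuousAt
  have hnc : Continuous n := by
    rw [continuous_iff_continuousAt]; exact fun r => (hnd r).continuousAt
  -- `n r` equals `∫ r..R, ρ s * s`
  have hn_int : ∀ r, n r = ∫ s in r..R, ρ s * s := by
    intro r
    have := intervalIntegral.integral_add_adjacent_intervals (μ := volume)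
      (hNc.intervalIntegrable 0 r) (hNc.intervalIntegrable r R)
    simp only [hndef, hNdef]
    linarith [this]
  -- the key quantity
  set J : ℝ := ∫ r in (0:ℝ)..R, ρ r * m r * r with hJdef
  set IP : ℝ := ∫ r in (0:ℝ)..R, P r * (4 * π * r ^ 2) with hIPdef
  ---------------------------------------------------------------------------
  -- Step 1 (virial): ∫ P' r * 4πr³ = -3 * IP
  ---------------------------------------------------------------------------
  have hvirial : (∫ r in (0:ℝ)..R, P' r * (4 * π * r ^ 3)) = -3 * IP := by
    have hF : ∀ x ∈ Set.uIcc (0:ℝ) R, HasDerivAt (fun r => P r * (4 * π * r ^ 3))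
        (P' x * (4 * π * x ^ 3) + P x * (4 * π * (3 * x ^ 2))) x := by
      intro x _
      have h1 : HasDerivAt (fun r : ℝ => 4 * π * r ^ 3) (4 * π * (3 * x ^ 2)) x := by
        have := (hasDerivAt_pow 3 x).const_mul (4 * π)
        simpa [mul_comm, mul_assoc, mul_left_comm] using this
      exact (hPd x).mul h1
    have hint : IntervalIntegrable
        (fun x => P' x * (4 * π * x ^ 3) + P x * (4 * π * (3 * x ^ 2))) volume 0 R := by
      apply Continuous.intervalIntegrable; fun_prop
    have heq := intervalIntegral.integral_eq_sub_of_hasDerivAt hF hint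
    rw [hPR] at heq
    have hsplit : (∫ r in (0:ℝ)..R, (P' r * (4 * π * r ^ 3) + P r * (4 * π * (3 * r ^ 2))))
        = (∫ r in (0:ℝ)..R, P' r * (4 * π * r ^ 3))
          + ∫ r in (0:ℝ)..R, P r * (4 * π * (3 * r ^ 2)) := by
      apply intervalIntegral.integral_add
      · apply Continuous.intervalIntegrable; fun_prop
      · apply Continuous.intervalIntegrable; fun_prop
    have h3 : (∫ r in (0:ℝ)..R, P r * (4 * π * (3 * r ^ 2))) = 3 * IP := by
      rw [hIPdef, ← intervalIntegral.integral_const_mul]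
      apply intervalIntegral.integral_congr
      intro x _; ring
    rw [hsplit, h3] at heq
    simp only [zero_pow, mul_zero, zero_mul, sub_zero] at heq
    linarith [heq]
  ---------------------------------------------------------------------------
  -- Step 2: ∫ P' r * 4πr³ = -(4πG) * J  (hydrostatic equation)
  ---------------------------------------------------------------------------
  have hhyd : (∫ r in (0:ℝ)..R, P' r * (4 * π * r ^ 3))
      = -(4 * π * G) * J := by
    rw [hJdef, ← intervalIntegral.integral_const_mul]
    apply intervalIntegral.integral_congr
    intro x hx
    rcases eq_or_lt_of_le ((Set.uIcc_of_le hR.le ▸ hx).1) with h0 | h0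
    · simp [← h0]
    · have hx0 : x ≠ 0 := ne_of_gt h0
      have hpx : P' x = -G * ρ x * m x / x ^ 2 := by
        rw [← hhydro x h0]
        exact ((hPd x).deriv).symm
      show P' x * (4 * π * x ^ 3) = -(4 * π * G) * (ρ x * m x * x)
      rw [hpx]
      field_simp
  ---------------------------------------------------------------------------
  -- Step 3 (integration by parts for potential): ∫ 4π ρ r² n = J
  ---------------------------------------------------------------------------
  have hibp2 : (∫ r in (0:ℝ)..R, 4 * π * (ρ r * r ^ 2) * n r) = J := by
    have hF : ∀ x ∈ Set.uIcc (0:ℝ) R, HasDerivAt (fun r => m r * n r)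
        (4 * π * (ρ x * x ^ 2) * n x + m x * -(ρ x * x)) x := by
      intro x _
      exact (hmd x).mul (hnd x)
    have hint : IntervalIntegrable
        (fun x => 4 * π * (ρ x * x ^ 2) * n x + m x * -(ρ x * x)) volume 0 R := by
      apply Continuous.intervalIntegrable; fun_prop
    have heq := intervalIntegral.integral_eq_sub_of_hasDerivAt hF hint
    rw [hnR, hm0] at heq
    have hsplit : (∫ r in (0:ℝ)..R, (4 * π * (ρ r * r ^ 2) * n r + m r * -(ρ r * r)))
        = (∫ r in (0:ℝ)..R, 4 * π * (ρ r * r ^ 2) * n r)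
          + ∫ r in (0:ℝ)..R, m r * -(ρ r * r) := by
      apply intervalIntegral.integral_add
      · apply Continuous.intervalIntegrable; fun_prop
      · apply Continuous.intervalIntegrable; fun_prop
    have h2 : (∫ r in (0:ℝ)..R, m r * -(ρ r * r)) = -J := by
      rw [hJdef, ← intervalIntegral.integral_neg]
      apply intervalIntegral.integral_congr
      intro x _; ring
    rw [hsplit, h2] at heq
    simp only [mul_zero, zero_mul, sub_zero] at heq
    linarith [heq]
  ---------------------------------------------------------------------------
  -- Step 4: the potential formula Φ r = -G m r / r - 4πG n r on (0, R]
  ---------------------------------------------------------------------------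
  have hΦeq : ∀ r ∈ Set.Ioc (0:ℝ) R, Φ r = -(G * m r / r) - 4 * π * G * n r := by
    intro r hr
    obtain ⟨hr0, hrR⟩ := hr
    set f : ℝ → ℝ := fun r' => min r⁻¹ r'⁻¹ * ρ r' * r' ^ 2 with hfdef
    -- on (0, r], f = r⁻¹ * (ρ r' * r'²)
    have hf1 : Set.EqOn f (fun r' => r⁻¹ * (ρ r' * r' ^ 2)) (Set.Ioc 0 r) := by
      intro x hx
      have hmin : min r⁻¹ x⁻¹ = r⁻¹ :=
        min_eq_left ((inv_anti₀ hx.1 hx.2))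
      simp only [hfdef, hmin]; ring
    -- on (r, ∞), f = ρ r' * r'
    have hf2 : Set.EqOn f (fun r' => ρ r' * r') (Set.Ioi r) := by
      intro x hx
      have hx0 : 0 < x := lt_trans hr0 hx
      have hmin : min r⁻¹ x⁻¹ = x⁻¹ :=
        min_eq_right ((inv_anti₀ hr0 (le_of_lt hx)))
      simp only [hfdef, hmin]
      field_simp
    have hIoc_meas : MeasurableSet (Set.Ioc (0:ℝ) r) := measurableSet_Ioc
    have hIoi_meas : MeasurableSet (Set.Ioi r) := measurableSet_Ioi
    -- integrability on both pieces
    have hi1 : IntegrableOn f (Set.Ioc 0 r) := by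
      apply IntegrableOn.congr_fun _ hf1.symm hIoc_meas
      exact (Continuous.integrableOn_Ioc (by fun_prop))
    have hg2 : IntegrableOn (fun r' => ρ r' * r') (Set.Ioi r) := by
      have : Set.Ioi r = Set.Ioc r R ∪ Set.Ioi R := (Set.Ioc_union_Ioi_eq_Ioi hrR).symm
      rw [this]
      apply IntegrableOn.union
      · exact Continuous.integrableOn_Ioc hNc
      · apply IntegrableOn.congr_fun (integrableOn_zero) _ measurableSet_Ioi
        intro x hx
        simp [hρsupp x (le_of_lt hx)]
    have hi2 : IntegrableOn f (Set.Ioi r) :=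
      IntegrableOn.congr_fun hg2 hf2.symm hIoi_meas
    -- split the integral
    have hunion : Set.Ioi (0:ℝ) = Set.Ioc 0 r ∪ Set.Ioi r :=
      (Set.Ioc_union_Ioi_eq_Ioi hr0.le).symm
    have hsplit : (∫ r' in Set.Ioi (0:ℝ), f r')
        = (∫ r' in Set.Ioc (0:ℝ) r, f r') + ∫ r' in Set.Ioi r, f r' := by
      rw [hunion]
      exact setIntegral_union (Set.Ioc_disjoint_Ioi le_rfl) hIoi_meas hi1 hi2
    -- compute each piece
    have hp1 : (∫ r' in Set.Ioc (0:ℝ) r, f r') = r⁻¹ * M r := by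
      rw [setIntegral_congr_fun hIoc_meas hf1, MeasureTheory.integral_const_mul]
      have : M r = ∫ r' in Set.Ioc (0:ℝ) r, ρ r' * r' ^ 2 :=
        intervalIntegral.integral_of_le hr0.le
      rw [this]
    have hp2 : (∫ r' in Set.Ioi r, f r') = n r := by
      rw [setIntegral_congr_fun hIoi_meas hf2]
      have hu : Set.Ioi r = Set.Ioc r R ∪ Set.Ioi R := (Set.Ioc_union_Ioi_eq_Ioi hrR).symm
      rw [hu, setIntegral_union (Set.Ioc_disjoint_Ioi le_rfl) measurableSet_Ioi
        (Continuous.integrableOn_Ioc hNc)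
        (by
          apply IntegrableOn.congr_fun (integrableOn_zero) _ measurableSet_Ioi
          intro x hx; simp [hρsupp x (le_of_lt hx)])]
      have hz : (∫ r' in Set.Ioi R, ρ r' * r') = 0 := by
        rw [setIntegral_congr_fun measurableSet_Ioi
          (g := fun _ => (0:ℝ)) (fun x hx => by simp [hρsupp x (le_of_lt hx)])]
        simp
      rw [hz, add_zero, hn_int r, intervalIntegral.integral_of_le hrR]
    rw [hΦ r, hsplit, hp1, hp2, hm r]
    field_simp
    ring
  ---------------------------------------------------------------------------
  -- Step 5: the potential energy integral
  ---------------------------------------------------------------------------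
  have hpot : (∫ r in (0:ℝ)..R, ρ r * Φ r * (4 * π * r ^ 2))
      = -(8 * π * G) * J := by
    have hcongr : (∫ r in (0:ℝ)..R, ρ r * Φ r * (4 * π * r ^ 2))
        = ∫ r in (0:ℝ)..R,
            (-(4 * π * G) * (ρ r * m r * r) - (4 * π * G) * (4 * π * (ρ r * r ^ 2) * n r)) := by
      apply intervalIntegral.integral_congr
      intro x hx
      rcases eq_or_lt_of_le ((Set.uIcc_of_le hR.le ▸ hx).1) with h0 | h0
      · simp [← h0, hm0]
      · have hx0 : x ≠ 0 := ne_of_gt h0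
        show ρ x * Φ x * (4 * π * x ^ 2)
          = -(4 * π * G) * (ρ x * m x * x) - 4 * π * G * (4 * π * (ρ x * x ^ 2) * n x)
        rw [hΦeq x ⟨h0, (Set.uIcc_of_le hR.le ▸ hx).2⟩]
        field_simp
    rw [hcongr]
    rw [intervalIntegral.integral_sub
      (by apply Continuous.intervalIntegrable; fun_prop)
      (by apply Continuous.intervalIntegrable; fun_prop)]
    rw [intervalIntegral.integral_const_mul, intervalIntegral.integral_const_mul]
    rw [hibp2, ← hJdef]
    ring
  ---------------------------------------------------------------------------
  -- conclusion
  ---------------------------------------------------------------------------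
  have hW : -(4 * π * G) * J = -3 * IP := by rw [← hhyd, hvirial]
  have hfirst : (∫ r in (0:ℝ)..R, (A * ρ r ^ γ / (γ - 1)) * (4 * π * r ^ 2))
      = (1 / (γ - 1)) * IP := by
    rw [hIPdef, ← intervalIntegral.integral_const_mul]
    apply intervalIntegral.integral_congr
    intro x _
    simp only [hPdef]
    ring
  have hEval : E = ((4 - 3 * γ) / (γ - 1)) * IP := by
    rw [hE, hfirst, hpot]
    have : (1:ℝ)/2 * (-(8 * π * G) * J) = -(4 * π * G) * J := by ring
    rw [this, hW]
    field_simp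
    ring
  constructor
  · exact hEval
  · intro hγ43
    rw [hEval, hγ43]
    norm_num
end

section
/- (Lynden-Bell–Ostriker commutation formula.) Let u and ū be bounded C¹ velocity fields on [t₀,T)×ℝ³ with global flows φ and φ̄, let ξ be the Lebovitz displacement and ∆ the Lagrangian change operator. Then for any quantities Q, Q̄ ∈ C¹([t₀,T)×ℝ³), the identity ∆(DQ/Dt) = D̄(∆Q)/Dt holds on [t₀,T)×ℝ³, where DQ/Dt = ∂Q/∂t + Σₖ uᵏ ∂Q/∂xᵏ and D̄/Dt = ∂/∂t + Σₖ ūᵏ ∂/∂xᵏ, and ∆(DQ/Dt)(t,x) = (DQ/Dt)(t, x+ξ(t,x)) − (D̄Q̄/Dt)(t,x). -/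
/-- The convective (material) derivative `DQ/Dt = ∂Q/∂t + Σₖ uᵏ ∂Q/∂xᵏ`
associated with a velocity field `u`. -/
noncomputable def matD (u : ℝ → (Fin 3 → ℝ) → (Fin 3 → ℝ))
    (Q : ℝ → (Fin 3 → ℝ) → ℝ) (t : ℝ) (x : Fin 3 → ℝ) : ℝ :=
  deriv (fun s => Q s x) t
    + ∑ k, u t x k * fderiv ℝ (fun y => Q t y) x (Pi.single k 1)

open Set

theorem matD_eq_fderiv_aux (f : ℝ → (Fin 3 → ℝ) → ℝ)
    (hf : ContDiff ℝ 1 (fun q : ℝ × (Fin 3 → ℝ) => f q.1 q.2))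
    (t : ℝ) (x v : Fin 3 → ℝ) :
    deriv (fun s => f s x) t + ∑ k, v k * fderiv ℝ (fun y => f t y) x (Pi.single k 1)
      = fderiv ℝ (fun q : ℝ × (Fin 3 → ℝ) => f q.1 q.2) (t, x) (1, v) := by
  set F : ℝ × (Fin 3 → ℝ) → ℝ := fun q => f q.1 q.2 with hF
  have hD : HasFDerivAt F (fderiv ℝ F (t, x)) (t, x) :=
    (hf.differentiable one_ne_zero (t, x)).hasFDerivAt
  set D := fderiv ℝ F (t, x) with hDdef
  have h1 : HasDerivAt (fun s => f s x) (D (1, 0)) t := by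
    have hc : HasDerivAt (fun s : ℝ => (s, x)) ((1 : ℝ), (0 : Fin 3 → ℝ)) t :=
      HasDerivAt.prodMk (hasDerivAt_id t) (hasDerivAt_const t x)
    exact hD.comp_hasDerivAt t hc
  have h2 : HasFDerivAt (fun y => f t y)
      (D.comp (((0 : (Fin 3 → ℝ) →L[ℝ] ℝ)).prod (ContinuousLinearMap.id ℝ (Fin 3 → ℝ)))) x := by
    have hc : HasFDerivAt (fun y : Fin 3 → ℝ => ((t : ℝ), y))
        (((0 : (Fin 3 → ℝ) →L[ℝ] ℝ)).prod (ContinuousLinearMap.id ℝ (Fin 3 → ℝ))) x :=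
      HasFDerivAt.prodMk (hasFDerivAt_const t x) (hasFDerivAt_id x)
    exact hD.comp x hc
  rw [h1.deriv, h2.fderiv]
  have hterm : ∀ k : Fin 3,
      v k * (D.comp (((0 : (Fin 3 → ℝ) →L[ℝ] ℝ)).prod (ContinuousLinearMap.id ℝ (Fin 3 → ℝ))))
        (Pi.single k 1) = D (0, Pi.single k (v k)) := by
    intro k
    have heq : v k • (((0 : ℝ), Pi.single k (1:ℝ)) : ℝ × (Fin 3 → ℝ))
        = (((0:ℝ), (Pi.single k (v k) : Fin 3 → ℝ)) : ℝ × (Fin 3 → ℝ)) := by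
      ext i
      · simp
      · simp [Pi.single_apply, mul_ite]
    simp only [ContinuousLinearMap.comp_apply, ContinuousLinearMap.prod_apply,
      ContinuousLinearMap.zero_apply, ContinuousLinearMap.id_apply]
    rw [← smul_eq_mul, ← D.map_smul, heq]
  rw [Finset.sum_congr rfl (fun k _ => hterm k), ← map_sum]
  have hsum : (∑ k : Fin 3, (((0:ℝ), (Pi.single k (v k) : Fin 3 → ℝ)) : ℝ × (Fin 3 → ℝ)))
      = (((0:ℝ), v) : ℝ × (Fin 3 → ℝ)) := by
    ext i
    · simp [Prod.fst_sum]
    · simp [Prod.snd_sum, Finset.univ_sum_single]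
  rw [hsum, ← map_add]
  norm_num

theorem hasDerivAt_comp_curve_aux (f : ℝ × (Fin 3 → ℝ) → ℝ) (hf : ContDiff ℝ 1 f)
    (c : ℝ → Fin 3 → ℝ) (t : ℝ) (v : Fin 3 → ℝ) (hc : HasDerivAt c v t) :
    HasDerivAt (fun τ => f (τ, c τ)) (fderiv ℝ f (t, c t) (1, v)) t :=
  ((hf.differentiable one_ne_zero (t, c t)).hasFDerivAt).comp_hasDerivAt t (HasDerivAt.prodMk (hasDerivAt_id t) hc)

theorem deriv_unique_on_aux {f g : ℝ → ℝ} {a b t₀ T t : ℝ} (ht : t₀ < T) (htI : t ∈ Set.Ico t₀ T)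
    (hfg : Set.EqOn f g (Set.Ico t₀ T)) (hf : HasDerivAt f a t) (hg : HasDerivAt g b t) :
    a = b := by
  have hu : UniqueDiffWithinAt ℝ (Set.Ico t₀ T) t :=
    uniqueDiffWithinAt_convex (convex_Ico t₀ T)
      (by rw [interior_Ico]; exact Set.nonempty_Ioo.2 ht) (subset_closure htI)
  have h1 : HasDerivWithinAt f a (Set.Ico t₀ T) t := hf.hasDerivWithinAt
  have h2 : HasDerivWithinAt f b (Set.Ico t₀ T) t :=
    (hg.hasDerivWithinAt).congr (fun y hy => hfg hy) (hfg htI)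
  rw [← h1.derivWithin hu, ← h2.derivWithin hu]

open Set

theorem flow_semigroup_aux (t₀ T : ℝ)
    (ubar : ℝ → (Fin 3 → ℝ) → (Fin 3 → ℝ))
    (hubarC1 : ContDiff ℝ 1 (fun q : ℝ × (Fin 3 → ℝ) => ubar q.1 q.2))
    (φbar : ℝ → ℝ → (Fin 3 → ℝ) → (Fin 3 → ℝ))
    (hφbarC1 : ContDiff ℝ 1 (fun q : ℝ × ℝ × (Fin 3 → ℝ) => φbar q.1 q.2.1 q.2.2))
    (hφbarode : ∀ s ∈ Set.Ico t₀ T, ∀ y, ∀ t ∈ Set.Ico t₀ T,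
      HasDerivAt (fun τ => φbar τ s y) (ubar t (φbar t s y)) t)
    (hφbarinit : ∀ s ∈ Set.Ico t₀ T, ∀ y, φbar s s y = y)
    (t : ℝ) (htI : t ∈ Set.Ico t₀ T) (x : Fin 3 → ℝ) :
    ∀ τ ∈ Set.Ico t₀ T, φbar t₀ τ (φbar τ t x) = φbar t₀ t x := by
  intro τ hτI
  rcases eq_or_lt_of_le hτI.1 with heq | hlt
  · rw [← heq]
    exact hφbarinit t₀ ⟨le_rfl, lt_of_le_of_lt htI.1 htI.2⟩ _
  · -- t₀ < τ
    set w := φbar τ t x with hw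
    set f : ℝ → Fin 3 → ℝ := fun σ => φbar σ τ w with hfdef
    set g : ℝ → Fin 3 → ℝ := fun σ => φbar σ t x with hgdef
    have hfc : Continuous f := hφbarC1.continuous.comp
      (continuous_id.prodMk (continuous_const : Continuous fun _ : ℝ => ((τ, w) : ℝ × (Fin 3 → ℝ))))
    have hgc : Continuous g := hφbarC1.continuous.comp
      (continuous_id.prodMk (continuous_const : Continuous fun _ : ℝ => ((t, x) : ℝ × (Fin 3 → ℝ))))
    obtain ⟨R1, hR1⟩ := (isCompact_Icc (a := t₀) (b := τ)).exists_bound_of_continuousOn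
      hfc.continuousOn
    obtain ⟨R2, hR2⟩ := (isCompact_Icc (a := t₀) (b := τ)).exists_bound_of_continuousOn
      hgc.continuousOn
    set R := max R1 R2 with hRdef
    -- Lipschitz bound on a compact set
    set S : Set (ℝ × (Fin 3 → ℝ)) := Set.Icc t₀ τ ×ˢ Metric.closedBall 0 (R + 1) with hSdef
    have hSc : IsCompact S := isCompact_Icc.prod (isCompact_closedBall _ _)
    have hScv : Convex ℝ S := (convex_Icc _ _).prod (convex_closedBall _ _)
    set U : ℝ × (Fin 3 → ℝ) → Fin 3 → ℝ := fun q => ubar q.1 q.2 with hUdef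
    have hfd : Continuous fun q => ‖fderiv ℝ U q‖ :=
      (hubarC1.continuous_fderiv one_ne_zero).norm
    obtain ⟨C, hC⟩ := hSc.exists_bound_of_continuousOn hfd.continuousOn
    set K : NNReal := ⟨max C 0, le_max_right _ _⟩ with hKdef
    have hlip : LipschitzOnWith K U S := by
      apply hScv.lipschitzOnWith_of_nnnorm_fderiv_le
        (fun q _ => (hubarC1.differentiable one_ne_zero).differentiableAt)
      intro q hq
      rw [← NNReal.coe_le_coe]
      have h1 : ‖fderiv ℝ U q‖ ≤ C := by simpa using hC q hq
      calc (‖fderiv ℝ U q‖₊ : ℝ) = ‖fderiv ℝ U q‖ := rfl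
        _ ≤ C := h1
        _ ≤ max C 0 := le_max_left _ _
    -- clamped vector field
    set π : ℝ → ℝ := fun σ => max t₀ (min σ τ) with hπdef
    have hπ : ∀ σ, π σ ∈ Set.Icc t₀ τ := fun σ =>
      ⟨le_max_left _ _, max_le (le_of_lt hlt) (min_le_right _ _)⟩
    have hvK : ∀ σ : ℝ, LipschitzOnWith K (fun y => ubar (π σ) y)
        (Metric.closedBall (0 : Fin 3 → ℝ) (R + 1)) := by
      intro σ a ha b hb
      have h := hlip (Set.mk_mem_prod (hπ σ) ha) (Set.mk_mem_prod (hπ σ) hb)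
      simpa [Prod.edist_eq, U] using h
    have hπeq : ∀ σ ∈ Set.Ioc t₀ τ, π σ = σ := by
      intro σ hσ
      simp [hπdef, min_eq_left hσ.2, max_eq_right (le_of_lt hσ.1)]
    have key : Set.EqOn f g (Set.Icc t₀ τ) := by
      apply ODE_solution_unique_of_mem_Icc_left
        (v := fun σ y => ubar (π σ) y)
        (s := fun _ => Metric.closedBall (0 : Fin 3 → ℝ) (R + 1)) (fun σ _ => hvK σ)
        hfc.continuousOn ?_ ?_ hgc.continuousOn ?_ ?_ ?_
      · intro σ hσ
        have hσI : σ ∈ Set.Ico t₀ T := ⟨le_of_lt hσ.1, lt_of_le_of_lt hσ.2 hτI.2⟩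
        show HasDerivWithinAt f (ubar (π σ) (f σ)) (Set.Iic σ) σ
        rw [hπeq σ hσ]
        exact (hφbarode τ hτI w σ hσI).hasDerivWithinAt
      · intro σ hσ
        rw [Metric.mem_closedBall, dist_zero_right]
        exact le_trans (hR1 σ (Set.Ioc_subset_Icc_self hσ))
          (le_trans (le_max_left _ _) (by linarith [le_refl R]))
      · intro σ hσ
        have hσI : σ ∈ Set.Ico t₀ T := ⟨le_of_lt hσ.1, lt_of_le_of_lt hσ.2 hτI.2⟩
        show HasDerivWithinAt g (ubar (π σ) (g σ)) (Set.Iic σ) σ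
        rw [hπeq σ hσ]
        exact (hφbarode t htI x σ hσI).hasDerivWithinAt
      · intro σ hσ
        rw [Metric.mem_closedBall, dist_zero_right]
        exact le_trans (hR2 σ (Set.Ioc_subset_Icc_self hσ))
          (le_trans (le_max_right _ _) (by linarith [le_refl R]))
      · show f τ = g τ
        simp only [hfdef, hgdef]
        rw [hφbarinit τ hτI w]
    exact key ⟨le_rfl, le_of_lt hlt⟩

/-- **The Lynden-Bell–Ostriker commutation formula** `∆(DQ/Dt) = D̄(∆Q)/Dt`.
Here `φ`, `φbar` are the global flows of the perturbed and unperturbed bounded C¹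
velocity fields `u`, `ubar`; `ξ(t,x) = φ(t;t₀,φ̄(t₀;t,x)) − x` is the Lebovitz
displacement, and `∆Q(t,x) = Q(t,x+ξ(t,x)) − Q̄(t,x)` the Lagrangian change. -/
theorem lynden_bell_ostriker_commutation
    (t₀ T : ℝ) (ht : t₀ < T)
    (u ubar : ℝ → (Fin 3 → ℝ) → (Fin 3 → ℝ))
    (huC1 : ContDiff ℝ 1 (fun q : ℝ × (Fin 3 → ℝ) => u q.1 q.2))
    (hubarC1 : ContDiff ℝ 1 (fun q : ℝ × (Fin 3 → ℝ) => ubar q.1 q.2))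
    (hubd : ∃ C, ∀ t ∈ Set.Ico t₀ T, ∀ x, ‖u t x‖ ≤ C)
    (hubarbd : ∃ C, ∀ t ∈ Set.Ico t₀ T, ∀ x, ‖ubar t x‖ ≤ C)
    (φ φbar : ℝ → ℝ → (Fin 3 → ℝ) → (Fin 3 → ℝ))
    -- the flows are C¹ in all variables
    (hφC1 : ContDiff ℝ 1 (fun q : ℝ × ℝ × (Fin 3 → ℝ) => φ q.1 q.2.1 q.2.2))
    (hφbarC1 : ContDiff ℝ 1 (fun q : ℝ × ℝ × (Fin 3 → ℝ) => φbar q.1 q.2.1 q.2.2))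
    -- flow equations and initial conditions
    (hφode : ∀ s ∈ Set.Ico t₀ T, ∀ y, ∀ t ∈ Set.Ico t₀ T,
      HasDerivAt (fun τ => φ τ s y) (u t (φ t s y)) t)
    (hφinit : ∀ s ∈ Set.Ico t₀ T, ∀ y, φ s s y = y)
    (hφbarode : ∀ s ∈ Set.Ico t₀ T, ∀ y, ∀ t ∈ Set.Ico t₀ T,
      HasDerivAt (fun τ => φbar τ s y) (ubar t (φbar t s y)) t)
    (hφbarinit : ∀ s ∈ Set.Ico t₀ T, ∀ y, φbar s s y = y)
    -- the Lebovitz displacement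
    (ξ : ℝ → (Fin 3 → ℝ) → (Fin 3 → ℝ))
    (hξ : ∀ t x, ξ t x = φ t t₀ (φbar t₀ t x) - x)
    -- the perturbed and unperturbed quantities
    (Q Qbar : ℝ → (Fin 3 → ℝ) → ℝ)
    (hQ : ContDiff ℝ 1 (fun q : ℝ × (Fin 3 → ℝ) => Q q.1 q.2))
    (hQbar : ContDiff ℝ 1 (fun q : ℝ × (Fin 3 → ℝ) => Qbar q.1 q.2)) :
    ∀ t ∈ Set.Ico t₀ T, ∀ x,
      matD u Q t (x + ξ t x) - matD ubar Qbar t x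
        = matD ubar (fun s y => Q s (y + ξ s y) - Qbar s y) t x := by
  intro t htI x
  have ht₀I : t₀ ∈ Set.Ico t₀ T := ⟨le_rfl, ht⟩
  have hsg := flow_semigroup_aux t₀ T ubar hubarC1 φbar hφbarC1 hφbarode hφbarinit t htI x
  set z : Fin 3 → ℝ := φbar t₀ t x with hz
  -- the joint perturbed-quantity-along-displacement function
  have hinner0 : ContDiff ℝ 1 (fun q : ℝ × (Fin 3 → ℝ) => φbar t₀ q.1 q.2) :=
    hφbarC1.comp (contDiff_const.prodMk (contDiff_fst.prodMk contDiff_snd))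
  have hinner : ContDiff ℝ 1 (fun q : ℝ × (Fin 3 → ℝ) => φ q.1 t₀ (φbar t₀ q.1 q.2)) :=
    hφC1.comp (contDiff_fst.prodMk (contDiff_const.prodMk hinner0))
  set G : ℝ × (Fin 3 → ℝ) → ℝ := fun q => Q q.1 (φ q.1 t₀ (φbar t₀ q.1 q.2)) with hGdef
  have hGC1 : ContDiff ℝ 1 G := hQ.comp (contDiff_fst.prodMk hinner)
  have hkey : ∀ s y, Q s (y + ξ s y) = G (s, y) := by
    intro s y
    rw [hξ s y, hGdef]
    congr 1
    abel
  have hFeq : (fun q : ℝ × (Fin 3 → ℝ) => Q q.1 (q.2 + ξ q.1 q.2) - Qbar q.1 q.2)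
      = fun q : ℝ × (Fin 3 → ℝ) => G q - Qbar q.1 q.2 :=
    funext fun q => by rw [hkey q.1 q.2]
  have hFC1 : ContDiff ℝ 1
      (fun q : ℝ × (Fin 3 → ℝ) => Q q.1 (q.2 + ξ q.1 q.2) - Qbar q.1 q.2) := by
    rw [hFeq]; exact hGC1.sub hQbar
  -- rewrite displacement
  have hXz : x + ξ t x = φ t t₀ z := by rw [hξ t x]; abel
  rw [hXz]
  -- express all three matD's as joint Fréchet derivatives
  have m1 : matD u Q t (φ t t₀ z)
      = fderiv ℝ (fun q : ℝ × (Fin 3 → ℝ) => Q q.1 q.2) (t, φ t t₀ z) (1, u t (φ t t₀ z)) :=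
    matD_eq_fderiv_aux Q hQ t (φ t t₀ z) (u t (φ t t₀ z))
  have m2 : matD ubar Qbar t x
      = fderiv ℝ (fun q : ℝ × (Fin 3 → ℝ) => Qbar q.1 q.2) (t, x) (1, ubar t x) :=
    matD_eq_fderiv_aux Qbar hQbar t x (ubar t x)
  have m3 : matD ubar (fun s y => Q s (y + ξ s y) - Qbar s y) t x
      = fderiv ℝ (fun q : ℝ × (Fin 3 → ℝ) => Q q.1 (q.2 + ξ q.1 q.2) - Qbar q.1 q.2)
          (t, x) (1, ubar t x) :=
    matD_eq_fderiv_aux (fun s y => Q s (y + ξ s y) - Qbar s y) hFC1 t x (ubar t x)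
  rw [m1, m2, m3]
  have hdiff : fderiv ℝ (fun q : ℝ × (Fin 3 → ℝ) => Q q.1 (q.2 + ξ q.1 q.2) - Qbar q.1 q.2) (t, x)
      = fderiv ℝ G (t, x) - fderiv ℝ (fun q : ℝ × (Fin 3 → ℝ) => Qbar q.1 q.2) (t, x) := by
    rw [hFeq]
    exact fderiv_sub ((hGC1.differentiable one_ne_zero) (t, x))
      ((hQbar.differentiable one_ne_zero) (t, x))
  rw [hdiff, ContinuousLinearMap.sub_apply]
  rw [sub_eq_sub_iff_sub_eq_sub, sub_self, sub_eq_zero]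
  -- both sides are the derivative of `τ ↦ Q τ (φ τ t₀ z)` at `t`
  have hc : HasDerivAt (fun τ => φ τ t₀ z) (u t (φ t t₀ z)) t := hφode t₀ ht₀I z t htI
  have h1 : HasDerivAt (fun τ => Q τ (φ τ t₀ z))
      (fderiv ℝ (fun q : ℝ × (Fin 3 → ℝ) => Q q.1 q.2) (t, φ t t₀ z) (1, u t (φ t t₀ z))) t :=
    hasDerivAt_comp_curve_aux (fun q : ℝ × (Fin 3 → ℝ) => Q q.1 q.2) hQ
      (fun τ => φ τ t₀ z) t (u t (φ t t₀ z)) hc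
  have hγ : HasDerivAt (fun τ => φbar τ t x) (ubar t x) t := by
    have h := hφbarode t htI x t htI
    rwa [hφbarinit t htI x] at h
  have h2 : HasDerivAt (fun τ => G (τ, φbar τ t x))
      (fderiv ℝ G (t, φbar t t x) (1, ubar t x)) t :=
    hasDerivAt_comp_curve_aux G hGC1 (fun τ => φbar τ t x) t (ubar t x) hγ
  rw [hφbarinit t htI x] at h2
  have heqon : Set.EqOn (fun τ => Q τ (φ τ t₀ z)) (fun τ => G (τ, φbar τ t x))
      (Set.Ico t₀ T) := by
    intro τ hτ
    simp only [hGdef]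
    rw [hsg τ hτ]
  exact deriv_unique_on_aux ht htI heqon h1 h2
end

section
/- For a barotropic stationary axisymmetric configuration, the angular velocity is independent of z: if on an open connected set D ⊂ {(ϖ,z) : ϖ > 0} the functions u, Φ ∈ C²(D) and Ω ∈ C¹(D) satisfy −ϖΩ² + ∂u/∂ϖ = −∂Φ/∂ϖ and ∂u/∂z = −∂Φ/∂z, then ∂(ϖΩ²)/∂z = 0 on D; in particular Ω² is constant along every vertical segment contained in D. -/
/-- **For a barotropic stationary axisymmetric configuration the angular velocity
is independent of `z`:** if `−ϖΩ² + ∂u/∂ϖ = −∂Φ/∂ϖ` and `∂u/∂z = −∂Φ/∂z` on an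
open connected set `D ⊆ {ϖ > 0}` with `u, Φ ∈ C²(D)` and `Ω ∈ C¹(D)`, then
`∂(ϖΩ²)/∂z = 0` on `D`; in particular `Ω²` is constant along every vertical
segment contained in `D`. (A point `p : ℝ × ℝ` is `p = (ϖ, z)`.) -/
theorem angular_velocity_independent_of_z
    (D : Set (ℝ × ℝ)) (hDopen : IsOpen D) (hDconn : IsConnected D)
    (hDpos : ∀ p ∈ D, 0 < p.1)
    (u Φ Ω : ℝ × ℝ → ℝ)
    (hu : ContDiffOn ℝ 2 u D) (hΦ : ContDiffOn ℝ 2 Φ D)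
    (hΩ : ContDiffOn ℝ 1 Ω D)
    (heq1 : ∀ p ∈ D, -(p.1) * (Ω p) ^ 2 + fderiv ℝ u p (1, 0) = -fderiv ℝ Φ p (1, 0))
    (heq2 : ∀ p ∈ D, fderiv ℝ u p (0, 1) = -fderiv ℝ Φ p (0, 1)) :
    (∀ p ∈ D, fderiv ℝ (fun q : ℝ × ℝ => q.1 * (Ω q) ^ 2) p (0, 1) = 0)
    ∧ ∀ p ∈ D, ∀ q ∈ D, p.1 = q.1 → segment ℝ p q ⊆ D → (Ω p) ^ 2 = (Ω q) ^ 2 := by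
  set f : ℝ × ℝ → ℝ := fun q => u q + Φ q with hf_def
  have hf : ContDiffOn ℝ 2 f D := hu.add hΦ
  have hmem : ∀ {p : ℝ × ℝ}, p ∈ D → D ∈ nhds p := fun hp => hDopen.mem_nhds hp
  have hudiff : ∀ p ∈ D, DifferentiableAt ℝ u p := fun p hp =>
    (hu.contDiffAt (hmem hp)).differentiableAt two_ne_zero
  have hΦdiff : ∀ p ∈ D, DifferentiableAt ℝ Φ p := fun p hp =>
    (hΦ.contDiffAt (hmem hp)).differentiableAt two_ne_zero
  have hΩdiff : ∀ p ∈ D, DifferentiableAt ℝ Ω p := fun p hp =>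
    (hΩ.contDiffAt (hmem hp)).differentiableAt one_ne_zero
  have hfadd : ∀ p ∈ D, fderiv ℝ f p = fderiv ℝ u p + fderiv ℝ Φ p := fun p hp =>
    fderiv_add (hudiff p hp) (hΦdiff p hp)
  have hfd1 : ∀ p ∈ D, fderiv ℝ f p (1, 0) = p.1 * Ω p ^ 2 := by
    intro p hp
    have h1 := heq1 p hp
    rw [hfadd p hp]
    simp only [ContinuousLinearMap.add_apply]
    linarith
  have hfd2 : ∀ p ∈ D, fderiv ℝ f p (0, 1) = 0 := by
    intro p hp
    have h2 := heq2 p hp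
    rw [hfadd p hp]
    simp only [ContinuousLinearMap.add_apply]
    linarith
  have key : ∀ p ∈ D, fderiv ℝ (fun q : ℝ × ℝ => q.1 * (Ω q) ^ 2) p (0, 1) = 0 := by
    intro p hp
    have hfp : ContDiffAt ℝ 2 f p := hf.contDiffAt (hmem hp)
    have hsymm : IsSymmSndFDerivAt ℝ f p := hfp.isSymmSndFDerivAt (by simp)
    have hg : DifferentiableAt ℝ (fderiv ℝ f) p :=
      (hfp.fderiv_right (m := 1) le_rfl).differentiableAt one_ne_zero
    have heo : (fun q : ℝ × ℝ => q.1 * (Ω q) ^ 2) =ᶠ[nhds p]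
        fun q => fderiv ℝ f q (1, 0) := by
      filter_upwards [hmem hp] with q hq
      exact (hfd1 q hq).symm
    have h1 : fderiv ℝ (fun q : ℝ × ℝ => q.1 * (Ω q) ^ 2) p (0, 1)
        = fderiv ℝ (fderiv ℝ f) p (0, 1) (1, 0) := by
      rw [heo.fderiv_eq]
      have hc : HasFDerivAt (fun q => fderiv ℝ f q (1, 0))
          ((ContinuousLinearMap.apply ℝ ℝ ((1 : ℝ), (0 : ℝ))).comp
            (fderiv ℝ (fderiv ℝ f) p)) p :=
        (ContinuousLinearMap.apply ℝ ℝ ((1 : ℝ), (0 : ℝ))).hasFDerivAt.comp p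
          hg.hasFDerivAt
      rw [hc.fderiv]
      rfl
    have heo2 : (fun q : ℝ × ℝ => fderiv ℝ f q (0, 1)) =ᶠ[nhds p]
        fun _ => (0 : ℝ) := by
      filter_upwards [hmem hp] with q hq
      exact hfd2 q hq
    have h2 : fderiv ℝ (fderiv ℝ f) p (1, 0) (0, 1) = 0 := by
      have hc : HasFDerivAt (fun q => fderiv ℝ f q (0, 1))
          ((ContinuousLinearMap.apply ℝ ℝ ((0 : ℝ), (1 : ℝ))).comp
            (fderiv ℝ (fderiv ℝ f) p)) p :=
        (ContinuousLinearMap.apply ℝ ℝ ((0 : ℝ), (1 : ℝ))).hasFDerivAt.comp p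
          hg.hasFDerivAt
      have : fderiv ℝ (fun q : ℝ × ℝ => fderiv ℝ f q (0, 1)) p (1, 0)
          = fderiv ℝ (fderiv ℝ f) p (1, 0) (0, 1) := by
        rw [hc.fderiv]; rfl
      rw [← this, heo2.fderiv_eq, fderiv_fun_const]
      rfl
    rw [h1, hsymm.eq, h2]
  refine ⟨key, ?_⟩
  intro p hp q hq hpq hseg
  set F : ℝ × ℝ → ℝ := fun r => r.1 * (Ω r) ^ 2 with hF_def
  have hFdiff : ∀ r ∈ D, DifferentiableAt ℝ F r := fun r hr =>
    differentiableAt_fst.mul ((hΩdiff r hr).pow 2)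
  set L : ℝ → ℝ × ℝ := fun t => p + t • (q - p) with hL_def
  have hLseg : ∀ t ∈ Set.Icc (0 : ℝ) 1, L t ∈ segment ℝ p q := by
    intro t ht
    rw [segment_eq_image']
    exact ⟨t, ht, rfl⟩
  have hderiv : ∀ t ∈ Set.Icc (0 : ℝ) 1, HasDerivAt (F ∘ L) 0 t := by
    intro t ht
    have hLt : L t ∈ D := hseg (hLseg t ht)
    have hLd : HasDerivAt L (q - p) t := by
      have : HasDerivAt (fun t : ℝ => t • (q - p)) (q - p) t := by
        simpa using (hasDerivAt_id t).smul_const (q - p)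
      exact this.const_add p
    have hFd : HasFDerivAt F (fderiv ℝ F (L t)) (L t) := (hFdiff _ hLt).hasFDerivAt
    have hcomp := hFd.comp_hasDerivAt t hLd
    have hqp : q - p = (q.2 - p.2) • ((0 : ℝ), (1 : ℝ)) := by
      ext <;> simp [hpq.symm]
    have : fderiv ℝ F (L t) (q - p) = 0 := by
      rw [hqp, map_smul, key (L t) hLt, smul_zero]
    rwa [this] at hcomp
  have hconst : (F ∘ L) 1 = (F ∘ L) 0 := by
    have := constant_of_has_deriv_right_zero
      (f := F ∘ L) (a := 0) (b := 1)
      (fun x hx => ((hderiv x hx).continuousAt).continuousWithinAt)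
      (fun x hx => ((hderiv x (Set.mem_Icc_of_Ico hx)).hasDerivWithinAt))
    exact this 1 (Set.mem_Icc.mpr ⟨zero_le_one, le_rfl⟩)
  have hL0 : L 0 = p := by simp [hL_def]
  have hL1 : L 1 = q := by simp [hL_def]
  have : q.1 * (Ω q) ^ 2 = p.1 * (Ω p) ^ 2 := by
    simpa [hF_def, hL0, hL1] using hconst
  have hp1 : (0 : ℝ) < p.1 := hDpos p hp
  rw [hpq] at this
  exact (mul_left_cancel₀ (ne_of_gt (hpq ▸ hp1)) this.symm)
end
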